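/- arXiv:math/0103056 — 5 statements merged into one kernel-verified Lean document; each statement's English description precedes it below -/
import Mathlib

section
/- Let G be a row-finite directed graph which satisfies Condition (K), and let (E, v_0) be a 1-sink extension of G. Then the inessential part H_E := G^0 ∖ \overline{v_0} is a saturated hereditary subset of G^0. -/
/-- A directed graph realized inside ambient vertex type `V` and edge type `E`,
with globally given source and range maps. -/
structure DGraph (V E : Type*) where
  verts : Set V
  edges : Set E

variable {V E : Type*}

/-- The endpoints of every edge of the graph are vertices of the graph. -/
def WellFormed (s r : E → V) (G : DGraph V E) : Prop :=
  ∀ e ∈ G.edges, s e ∈ G.verts ∧ r e ∈ G.verts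

/-- Row-finite: every vertex emits only finitely many edges. -/
def RowFinite (s : E → V) (G : DGraph V E) : Prop :=
  ∀ v : V, {e ∈ G.edges | s e = v}.Finite

/-- A sink is a vertex emitting no edges. -/
def IsSink (s : E → V) (G : DGraph V E) (v : V) : Prop :=
  v ∈ G.verts ∧ ∀ e ∈ G.edges, s e ≠ v

/-- A source is a vertex receiving no edges. -/
def IsSource (r : E → V) (G : DGraph V E) (v : V) : Prop :=
  v ∈ G.verts ∧ ∀ e ∈ G.edges, r e ≠ v

/-- A path is a nonempty finite sequence of composable edges of the graph. -/
def IsPath (s r : E → V) (G : DGraph V E) (p : List E) : Prop :=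
  p ≠ [] ∧ (∀ e ∈ p, e ∈ G.edges) ∧ p.Chain' (fun e f => r e = s f)

/-- `PathFromTo s r G p v w` : `p` is a path in `G` with source `v` and range `w`. -/
def PathFromTo (s r : E → V) (G : DGraph V E) (p : List E) (v w : V) : Prop :=
  IsPath s r G p ∧ (∃ e, p.head? = some e ∧ s e = v) ∧
    (∃ e, p.getLast? = some e ∧ r e = w)

/-- `v ≥ w` : `v = w` or there is a path from `v` to `w`. -/
def Reach (s r : E → V) (G : DGraph V E) (v w : V) : Prop :=
  v = w ∨ ∃ p, PathFromTo s r G p v w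

/-- A loop based at `v` is a path with source and range `v`. -/
def IsLoop (s r : E → V) (G : DGraph V E) (p : List E) (v : V) : Prop :=
  PathFromTo s r G p v v

/-- A simple loop returns to its base point exactly once. -/
def IsSimpleLoop (s r : E → V) (G : DGraph V E) (p : List E) (v : V) : Prop :=
  IsLoop s r G p v ∧
    ∀ i (h : i + 1 < p.length), r (p.get ⟨i, Nat.lt_of_succ_lt h⟩) ≠ v

/-- Condition (K): every vertex is the base of no loop or of at least two
distinct simple loops. -/
def ConditionK (s r : E → V) (G : DGraph V E) : Prop :=
  ∀ v ∈ G.verts, (¬ ∃ p, IsLoop s r G p v) ∨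
    ∃ p q, IsSimpleLoop s r G p v ∧ IsSimpleLoop s r G q v ∧ p ≠ q

/-- A maximal tail in `G`. -/
def MaximalTail (s r : E → V) (G : DGraph V E) (γ : Set V) : Prop :=
  γ.Nonempty ∧ γ ⊆ G.verts ∧
  (∀ v ∈ γ, ∀ w ∈ γ, ∃ y ∈ γ, Reach s r G v y ∧ Reach s r G w y) ∧
  (∀ v w, Reach s r G v w → w ∈ γ → v ∈ γ) ∧
  (∀ w ∈ γ, ∃ e ∈ G.edges, s e = w ∧ r e ∈ γ)

/-- `(Eg, v0)` is a 1-sink extension of `G`. -/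
structure OneSinkExt (s r : E → V) (G Eg : DGraph V E) (v0 : V) : Prop where
  wfG : WellFormed s r G
  wfE : WellFormed s r Eg
  sub_verts : G.verts ⊆ Eg.verts
  sub_edges : G.edges ⊆ Eg.edges
  rowfin : RowFinite s Eg
  H_fin : (Eg.verts \ G.verts).Finite
  H_no_sources : ∀ v ∈ Eg.verts \ G.verts, ¬ IsSource r Eg v
  v0_mem : v0 ∈ Eg.verts \ G.verts
  v0_sink : IsSink s Eg v0
  sink_unique : ∀ v ∈ Eg.verts \ G.verts, IsSink s Eg v → v = v0
  no_H_loops : ∀ p v, IsLoop s r Eg p v →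
    ¬ (∀ e ∈ p, s e ∈ Eg.verts \ G.verts ∧ r e ∈ Eg.verts \ G.verts)
  new_edge_range : ∀ e ∈ Eg.edges, e ∉ G.edges → r e ∈ Eg.verts \ G.verts
  sinks_preserved : ∀ v, IsSink s G v → IsSink s Eg v

/-- The closure of the sink `v0` : the union of all maximal tails of `G`
every vertex of which reaches `v0` in `Eg`. -/
def closureSink (s r : E → V) (G Eg : DGraph V E) (v0 : V) : Set V :=
  {v | ∃ γ, MaximalTail s r G γ ∧ (∀ u ∈ γ, Reach s r Eg u v0) ∧ v ∈ γ}

/-- Hereditary subset of vertices. -/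
def Hereditary (s r : E → V) (G : DGraph V E) (K : Set V) : Prop :=
  ∀ e ∈ G.edges, s e ∈ K → r e ∈ K

/-- Saturated subset of vertices. -/
def Saturated (s r : E → V) (G : DGraph V E) (K : Set V) : Prop :=
  ∀ v ∈ G.verts, ¬ IsSink s G v → (∀ e ∈ G.edges, s e = v → r e ∈ K) → v ∈ K

/-- For a row-finite graph `G` satisfying Condition (K) and a 1-sink
extension `(Eg, v0)` of `G`, the inessential part `H_E = G^0 \ closure(v0)` is a
saturated hereditary subset of `G^0`. -/
theorem inessentialPart_saturated_hereditary
    (s r : E → V) (G Eg : DGraph V E) (v0 : V)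
    (hGrf : RowFinite s G) (hK : ConditionK s r G)
    (hext : OneSinkExt s r G Eg v0) :
    (G.verts \ closureSink s r G Eg v0) ⊆ G.verts ∧
    Hereditary s r G (G.verts \ closureSink s r G Eg v0) ∧
    Saturated s r G (G.verts \ closureSink s r G Eg v0) := by
  refine ⟨Set.diff_subset, ?_, ?_⟩
  · intro e he hse
    refine ⟨(hext.wfG e he).2, ?_⟩
    rintro ⟨γ, hγ, hr, hmem⟩
    refine hse.2 ⟨γ, hγ, hr, hγ.2.2.2.1 _ _ (Or.inr ⟨[e], ⟨⟨by simp, by simp [he], List.isChain_singleton _⟩, ⟨e, rfl, rfl⟩, ⟨e, by simp, rfl⟩⟩⟩) hmem⟩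
  · intro v hv _ hall
    refine ⟨hv, ?_⟩
    rintro ⟨γ, hγ, hr, hmem⟩
    obtain ⟨e, he, hse, hre⟩ := hγ.2.2.2.2 v hmem
    exact (hall e he hse).2 ⟨γ, hγ, hr, hre⟩
end

section
/- Let G be a row-finite directed graph which satisfies Condition (K), and let (E, v_0) be a 1-sink extension of G. If w ∈ H_E (the inessential part of E), then the set of paths α in E with source w and range v_0 is finite. -/
variable {V E : Type*}

section Aux

variable {s r : E → V} {G D : DGraph V E}

lemma aux_path_cons {e : E} {t : List E} {x w : V}
    (ht : PathFromTo s r G t x w) (he : e ∈ G.edges) (hre : r e = x) :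
    PathFromTo s r G (e :: t) (s e) w := by
  obtain ⟨⟨htne, hmem, hch⟩, ⟨e1, he1, hse1⟩, ⟨e2, he2, hre2⟩⟩ := ht
  refine ⟨⟨by simp, ?_, ?_⟩, ⟨e, rfl, rfl⟩, ⟨e2, ?_, hre2⟩⟩
  · intro a ha
    rcases List.mem_cons.1 ha with h | h
    · subst h; exact he
    · exact hmem a h
  · rw [List.Chain', List.isChain_cons]
    refine ⟨fun y hy => ?_, hch⟩
    rw [he1] at hy
    cases hy
    rw [hre, ← hse1]
  · cases t with
    | nil => simp at htne
    | cons a l => rw [List.getLast?_cons_cons]; exact he2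

lemma aux_path_tail {e : E} {t : List E} {v w : V}
    (h : PathFromTo s r G (e :: t) v w) (ht : t ≠ []) :
    PathFromTo s r G t (r e) w := by
  obtain ⟨⟨_, hmem, hch⟩, _, ⟨e2, he2, hre2⟩⟩ := h
  rw [List.Chain', List.isChain_cons] at hch
  cases t with
  | nil => exact absurd rfl ht
  | cons a l =>
    rw [List.getLast?_cons_cons] at he2
    refine ⟨⟨by simp, fun x hx => hmem x (List.mem_cons_of_mem _ hx), hch.2⟩,
      ⟨a, rfl, (hch.1 a rfl).symm⟩, ⟨e2, he2, hre2⟩⟩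

lemma aux_path_append {p q : List E} {u v w : V}
    (hp : PathFromTo s r G p u v) (hq : PathFromTo s r G q v w) :
    PathFromTo s r G (p ++ q) u w := by
  obtain ⟨⟨hpne, hpm, hpc⟩, ⟨e1, he1, hse1⟩, ⟨e2, he2, hre2⟩⟩ := hp
  obtain ⟨⟨hqne, hqm, hqc⟩, ⟨e3, he3, hse3⟩, ⟨e4, he4, hre4⟩⟩ := hq
  refine ⟨⟨by simp [hpne], ?_, ?_⟩, ⟨e1, ?_, hse1⟩, ⟨e4, ?_, hre4⟩⟩
  · intro a ha
    rcases List.mem_append.1 ha with h | h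
    exacts [hpm a h, hqm a h]
  · rw [List.Chain', List.isChain_append]
    refine ⟨hpc, hqc, fun x hx y hy => ?_⟩
    rw [Option.mem_def, he2, Option.some.injEq] at hx
    rw [Option.mem_def, he3, Option.some.injEq] at hy
    subst hx; subst hy
    rw [hre2, ← hse3]
  · rw [List.head?_append, he1]; rfl
  · rw [List.getLast?_append_of_ne_nil _ hqne]; exact he4

lemma aux_reach_trans {u v w : V} (h1 : Reach s r G u v) (h2 : Reach s r G v w) :
    Reach s r G u w := by
  rcases h1 with rfl | ⟨p, hp⟩
  · exact h2
  rcases h2 with rfl | ⟨q, hq⟩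
  · exact Or.inr ⟨p, hp⟩
  · exact Or.inr ⟨p ++ q, aux_path_append hp hq⟩

lemma aux_reach_mono {u v : V} (h : G.edges ⊆ D.edges) (hr : Reach s r G u v) :
    Reach s r D u v := by
  rcases hr with rfl | ⟨p, ⟨hne, hm, hc⟩, h2, h3⟩
  · exact Or.inl rfl
  · exact Or.inr ⟨p, ⟨hne, fun e he => h (hm e he), hc⟩, h2, h3⟩

lemma aux_reach_edge {e : E} (he : e ∈ G.edges) : Reach s r G (s e) (r e) :=
  Or.inr ⟨[e], ⟨by simp, by simp [he], by simp [List.Chain']⟩, ⟨e, rfl, rfl⟩, ⟨e, rfl, rfl⟩⟩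

lemma aux_reach_src {v w : V} (hwf : WellFormed s r G) (hv : w ∈ G.verts)
    (h : Reach s r G v w) : v ∈ G.verts := by
  rcases h with rfl | ⟨p, hp, ⟨e, he, hse⟩, _⟩
  · exact hv
  · have := (hwf e (hp.2.1 e (List.mem_of_mem_head? he))).1
    rwa [hse] at this

/-- segment of an infinite edge sequence -/
def aux_seg (f : ℕ → E) : ℕ → ℕ → List E
  | _, 0 => []
  | a, k + 1 => f a :: aux_seg f (a + 1) k

lemma aux_seg_mem {f : ℕ → E} : ∀ k a e, e ∈ aux_seg f a k → ∃ i, i < k ∧ e = f (a + i) := by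
  intro k
  induction k with
  | zero => intro a e he; simp [aux_seg] at he
  | succ n ih =>
    intro a e he
    rcases List.mem_cons.1 he with h | h
    · exact ⟨0, Nat.succ_pos n, by simpa using h⟩
    · obtain ⟨i, hi, he⟩ := ih (a + 1) e h
      exact ⟨i + 1, by omega, by rw [he]; congr 1; omega⟩

lemma aux_seg_path {f : ℕ → E} (hmem : ∀ n, f n ∈ D.edges)
    (hc : ∀ n, r (f n) = s (f (n + 1))) :
    ∀ k a, PathFromTo s r D (aux_seg f a (k + 1)) (s (f a)) (r (f (a + k))) := by
  intro k
  induction k with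
  | zero =>
    intro a
    exact ⟨⟨by simp [aux_seg], by simp [aux_seg, hmem], by simp [aux_seg, List.Chain']⟩,
      ⟨f a, rfl, rfl⟩, ⟨f a, rfl, rfl⟩⟩
  | succ n ih =>
    intro a
    have h := aux_path_cons (ih (a + 1)) (hmem a) (hc a)
    have : a + 1 + n = a + (n + 1) := by omega
    rw [this] at h
    exact h

lemma aux_seg_reach {f : ℕ → E} (hmem : ∀ n, f n ∈ D.edges)
    (hc : ∀ n, r (f n) = s (f (n + 1))) :
    ∀ k a, Reach s r D (s (f a)) (s (f (a + k))) := by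
  intro k
  induction k with
  | zero => intro a; exact Or.inl rfl
  | succ n ih =>
    intro a
    refine aux_reach_trans (ih a) ?_
    have h := aux_reach_edge (s := s) (r := r) (hmem (a + n))
    rw [hc (a + n)] at h
    have : a + n + 1 = a + (n + 1) := by omega
    rwa [this] at h

end Aux

/-- If `w` lies in the inessential part of a 1-sink extension
`(Eg, v0)` of a row-finite graph `G` satisfying Condition (K), then there are
only finitely many paths in `Eg` from `w` to `v0`. -/
theorem finitely_many_paths_to_sink_from_inessential
    (s r : E → V) (G Eg : DGraph V E) (v0 : V)
    (hGrf : RowFinite s G) (hK : ConditionK s r G)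
    (hext : OneSinkExt s r G Eg v0)
    (w : V) (hw : w ∈ G.verts \ closureSink s r G Eg v0) :
    {p : List E | PathFromTo s r Eg p w v0}.Finite := by
  by_contra hbad
  -- Step lemma: from a "bad" vertex there is an edge to another bad vertex.
  have hKey : ∀ v : V, ¬ {p : List E | PathFromTo s r Eg p v v0}.Finite →
      ∃ e, e ∈ Eg.edges ∧ s e = v ∧
        ¬ {p : List E | PathFromTo s r Eg p (r e) v0}.Finite := by
    intro v hv
    by_contra hcon
    push_neg at hcon
    apply hv
    have hsub : {p : List E | PathFromTo s r Eg p v v0} ⊆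
        ⋃ e ∈ {e ∈ Eg.edges | s e = v},
          {p : List E | PathFromTo s r Eg p v v0 ∧ p.head? = some e} := by
      intro p hp
      obtain ⟨⟨hne, hmem, _⟩, ⟨e, he, hse⟩, _⟩ := id hp
      exact Set.mem_biUnion ⟨hmem e (List.mem_of_mem_head? he), hse⟩ ⟨hp, he⟩
    refine Set.Finite.subset (Set.Finite.biUnion (hext.rowfin v) ?_) hsub
    intro e he
    have hinj : Set.InjOn List.tail
        {p : List E | PathFromTo s r Eg p v v0 ∧ p.head? = some e} := by
      intro p hp q hq h
      rw [← List.cons_head?_tail hp.2, ← List.cons_head?_tail hq.2, h]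
    refine Set.Finite.of_finite_image (Set.Finite.subset ?_
      (show List.tail '' {p : List E | PathFromTo s r Eg p v v0 ∧ p.head? = some e} ⊆
        insert ([] : List E) {p : List E | PathFromTo s r Eg p (r e) v0} from ?_)) hinj
    · exact Set.Finite.insert _ (hcon e he.1 he.2)
    · rintro _ ⟨p, ⟨hp, hhead⟩, rfl⟩
      by_cases ht : p.tail = []
      · rw [ht]; exact Set.mem_insert _ _
      · refine Set.mem_insert_of_mem _ ?_
        have hp' : PathFromTo s r Eg (e :: p.tail) v v0 := by
          rwa [List.cons_head?_tail hhead]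
        exact aux_path_tail hp' ht
  have hEne : Nonempty E := by
    obtain ⟨p0, hp0⟩ := Set.Infinite.nonempty (show Set.Infinite _ from hbad)
    obtain ⟨e0, he0, _⟩ := hp0.2.1
    exact ⟨e0⟩
  choose! nxt hn1 hn2 hn3 using hKey
  -- the infinite path
  set f : ℕ → E := fun n => Nat.rec (nxt w) (fun _ e => nxt (r e)) n with hf
  have hf0 : f 0 = nxt w := rfl
  have hfs : ∀ n, f (n + 1) = nxt (r (f n)) := fun n => rfl
  have hstep : ∀ n, f n ∈ Eg.edges ∧
      ¬ {p : List E | PathFromTo s r Eg p (r (f n)) v0}.Finite := by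
    intro n
    induction n with
    | zero => rw [hf0]; exact ⟨hn1 w hbad, hn3 w hbad⟩
    | succ k ih => rw [hfs]; exact ⟨hn1 _ ih.2, hn3 _ ih.2⟩
  have hs0 : s (f 0) = w := by rw [hf0]; exact hn2 w hbad
  have hch : ∀ n, r (f n) = s (f (n + 1)) := by
    intro n
    rw [hfs]
    exact (hn2 _ (hstep n).2).symm
  have hmemE : ∀ n, f n ∈ Eg.edges := fun n => (hstep n).1
  -- all edges of the infinite path lie in G
  have hG : ∀ n, f n ∈ G.edges := by
    by_contra hc
    push_neg at hc
    obtain ⟨N, hN⟩ := hc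
    have hH : ∀ m, r (f (N + m)) ∈ Eg.verts \ G.verts := by
      intro m
      induction m with
      | zero => exact hext.new_edge_range _ (hmemE N) hN
      | succ k ih =>
        have hs : s (f (N + k + 1)) ∈ Eg.verts \ G.verts := by rw [← hch]; exact ih
        have hnot : f (N + k + 1) ∉ G.edges := fun h => hs.2 (hext.wfG _ h).1
        have h2 := hext.new_edge_range _ (hmemE (N + k + 1)) hnot
        have : N + (k + 1) = N + k + 1 := by omega
        rwa [this]
    have hH' : ∀ x, N ≤ x → r (f x) ∈ Eg.verts \ G.verts := by
      intro x hx
      have := hH (x - N)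
      rwa [Nat.add_sub_cancel' hx] at this
    have hfin : Finite ↥(Eg.verts \ G.verts) := hext.H_fin
    obtain ⟨i, j, hne, heq⟩ := Finite.exists_ne_map_eq_of_infinite
      (fun m : ℕ => (⟨r (f (N + m)), hH m⟩ : ↥(Eg.verts \ G.verts)))
    have heq' : r (f (N + i)) = r (f (N + j)) := congrArg Subtype.val heq
    -- normalize to m1 < m2
    obtain ⟨m1, m2, hm12, hmN, hreq⟩ :
        ∃ m1 m2, m1 < m2 ∧ N ≤ m1 ∧ r (f m1) = r (f m2) := by
      rcases lt_or_gt_of_ne hne with h | h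
      · exact ⟨N + i, N + j, by omega, by omega, heq'⟩
      · exact ⟨N + j, N + i, by omega, by omega, heq'.symm⟩
    -- build the loop inside H
    set d := m2 - m1 - 1 with hd
    have hpath := aux_seg_path (D := Eg) hmemE hch d (m1 + 1)
    have hm2 : m1 + 1 + d = m2 := by omega
    rw [hm2] at hpath
    have hsrc : s (f (m1 + 1)) = r (f m2) := by rw [← hch, hreq]
    rw [hsrc] at hpath
    refine hext.no_H_loops _ _ hpath ?_
    intro e he
    obtain ⟨t, htd, rfl⟩ := aux_seg_mem _ _ _ he
    constructor
    · have : m1 + 1 + t = (m1 + t) + 1 := by omega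
      rw [this, ← hch]
      exact hH' (m1 + t) (by omega)
    · exact hH' (m1 + 1 + t) (by omega)
  have hGv : ∀ n, s (f n) ∈ G.verts := fun n => (hext.wfG _ (hG n)).1
  -- reach to v0 in Eg from each vertex of the path
  have hreach0 : ∀ i, Reach s r Eg (s (f i)) v0 := by
    intro i
    cases i with
    | zero =>
      obtain ⟨p, hp⟩ := Set.Infinite.nonempty (show Set.Infinite _ from hbad)
      rw [hs0]
      exact Or.inr ⟨p, hp⟩
    | succ k =>
      obtain ⟨p, hp⟩ := Set.Infinite.nonempty (show Set.Infinite _ from (hstep k).2)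
      rw [← hch k]
      exact Or.inr ⟨p, hp⟩
  -- the maximal tail
  set γ : Set V := {v | ∃ i, Reach s r G v (s (f i))} with hγ
  have hseg : ∀ a k, Reach s r G (s (f a)) (s (f (a + k))) := fun a k =>
    aux_seg_reach (D := G) hG hch k a
  have hsegle : ∀ a b, a ≤ b → Reach s r G (s (f a)) (s (f b)) := by
    intro a b hab
    have := hseg a (b - a)
    rwa [Nat.add_sub_cancel' hab] at this
  have hMT : MaximalTail s r G γ := by
    refine ⟨⟨s (f 0), 0, Or.inl rfl⟩, ?_, ?_, ?_, ?_⟩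
    · rintro v ⟨i, hi⟩
      exact aux_reach_src hext.wfG (hGv i) hi
    · rintro v ⟨i, hi⟩ u ⟨j, hj⟩
      refine ⟨s (f (max i j)), ⟨max i j, Or.inl rfl⟩,
        aux_reach_trans hi (hsegle i (max i j) (le_max_left i j)),
        aux_reach_trans hj (hsegle j (max i j) (le_max_right i j))⟩
    · rintro v u hvu ⟨i, hi⟩
      exact ⟨i, aux_reach_trans hvu hi⟩
    · rintro v ⟨i, hi⟩
      rcases hi with rfl | ⟨p, hp⟩
      · exact ⟨f i, hG i, rfl, i + 1, Or.inl (hch i)⟩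
      · obtain ⟨hip, ⟨e, he, hse⟩, hlast⟩ := id hp
        have hpe : p = e :: p.tail := (List.cons_head?_tail he).symm
        refine ⟨e, hip.2.1 e (List.mem_of_mem_head? he), hse, ?_⟩
        by_cases ht : p.tail = []
        · -- p = [e], so r e = s (f i)
          obtain ⟨e2, he2, hre2⟩ := hlast
          have : p = [e] := by rw [hpe, ht]
          rw [this] at he2
          simp at he2
          subst he2
          exact ⟨i, Or.inl hre2⟩
        · have hp' : PathFromTo s r G (e :: p.tail) v (s (f i)) := by rwa [← hpe]
          exact ⟨i, Or.inr ⟨p.tail, aux_path_tail hp' ht⟩⟩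
  refine hw.2 ⟨γ, hMT, ?_, ⟨0, Or.inl hs0.symm⟩⟩
  rintro u ⟨i, hi⟩
  exact aux_reach_trans (aux_reach_mono hext.sub_edges hi) (hreach0 i)
end

section
/- Let G be a row-finite directed graph which satisfies Condition (K), and let (E, v_0) be a 1-sink extension of G. If v ∈ H_E (the inessential part of E) and n_E(v) > 0, where n_E(v) denotes the number of paths in E with source v and range v_0, then there does not exist an edge e ∈ G^1 with s(e) = r(e) = v. -/
variable {V E : Type*}

lemma pathFromTo_trans (s r : E → V) (G : DGraph V E) {p q : List E} {u w x : V}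
    (hp : PathFromTo s r G p u w) (hq : PathFromTo s r G q w x) :
    PathFromTo s r G (p ++ q) u x := by
  obtain ⟨⟨hpne, hpmem, hpch⟩, ⟨e, he, hse⟩, ⟨f, hf, hrf⟩⟩ := hp
  obtain ⟨⟨hqne, hqmem, hqch⟩, ⟨g, hg, hsg⟩, ⟨h, hh, hrh⟩⟩ := hq
  refine ⟨⟨by simp [hpne], ?_, ?_⟩, ⟨e, ?_, hse⟩, ⟨h, ?_, hrh⟩⟩
  · intro a ha; rcases List.mem_append.mp ha with h' | h'
    exacts [hpmem a h', hqmem a h']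
  · refine List.isChain_append.mpr ⟨hpch, hqch, ?_⟩
    intro a ha b hb
    rw [hf] at ha; rw [hg] at hb
    cases ha; cases hb; rw [hrf, hsg]
  · rw [List.head?_append, he]; rfl
  · rw [List.getLast?_append, hh]; rfl

lemma reach_trans (s r : E → V) (G : DGraph V E) {u w x : V}
    (h1 : Reach s r G u w) (h2 : Reach s r G w x) : Reach s r G u x := by
  rcases h1 with rfl | ⟨p, hp⟩
  · exact h2
  rcases h2 with rfl | ⟨q, hq⟩
  · exact Or.inr ⟨p, hp⟩
  · exact Or.inr ⟨p ++ q, pathFromTo_trans s r G hp hq⟩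

lemma reach_mono (s r : E → V) {G Eg : DGraph V E} (hsub : G.edges ⊆ Eg.edges)
    {u w : V} (h : Reach s r G u w) : Reach s r Eg u w := by
  rcases h with rfl | ⟨p, ⟨hne, hmem, hch⟩, h2, h3⟩
  · exact Or.inl rfl
  · exact Or.inr ⟨p, ⟨hne, fun e he => hsub (hmem e he), hch⟩, h2, h3⟩

/-- If `v` lies in the inessential part of a 1-sink extension
`(Eg, v0)` of a row-finite graph `G` satisfying Condition (K), and there
exists at least one path in `Eg` from `v` to `v0` (i.e. `n_E(v) > 0`), then
there is no edge `e ∈ G^1` with `s e = r e = v`. -/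
theorem no_loop_edge_at_inessential_vertex_reaching_sink
    (s r : E → V) (G Eg : DGraph V E) (v0 : V)
    (hGrf : RowFinite s G) (hK : ConditionK s r G)
    (hext : OneSinkExt s r G Eg v0)
    (v : V) (hv : v ∈ G.verts \ closureSink s r G Eg v0)
    (hn : {p : List E | PathFromTo s r Eg p v v0}.Nonempty) :
    ¬ ∃ e ∈ G.edges, s e = v ∧ r e = v := by
  rintro ⟨e, heG, hse, hre⟩
  obtain ⟨hvG, hvcl⟩ := hv
  apply hvcl
  -- the maximal tail: all vertices reaching v in G
  refine ⟨{w | Reach s r G w v}, ⟨⟨v, Or.inl rfl⟩, ?_, ?_, ?_, ?_⟩, ?_, Or.inl rfl⟩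
  · -- subset of verts
    rintro w (rfl | ⟨p, ⟨hne, hmem, hch⟩, ⟨f, hf, hsf⟩, -⟩)
    · exact hvG
    · have : f ∈ p := by
        cases p with
        | nil => exact absurd rfl hne
        | cons a t =>
          simp only [List.head?_cons, Option.some.injEq] at hf
          cases hf; exact List.mem_cons_self
      exact hsf ▸ (hext.wfG f (hmem f this)).1
  · -- cofinality
    intro a ha b hb
    exact ⟨v, Or.inl rfl, ha, hb⟩
  · -- upward closed
    intro a b hab hb
    exact reach_trans s r G hab hb
  · -- edge into γ
    rintro w (rfl | ⟨p, hp⟩)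
    · exact ⟨e, heG, hse, Or.inl (hre)⟩
    · obtain ⟨⟨hne, hmem, hch⟩, ⟨f, hf, hsf⟩, ⟨g, hg, hrg⟩⟩ := hp
      cases p with
      | nil => exact absurd rfl hne
      | cons a t =>
        simp only [List.head?_cons, Option.some.injEq] at hf
        cases hf
        refine ⟨f, hmem f List.mem_cons_self, hsf, ?_⟩
        cases t with
        | nil =>
          simp only [List.getLast?_singleton, Option.some.injEq] at hg
          exact Or.inl (hg ▸ hrg)
        | cons b t' =>
          have hjun : r f = s b := (List.isChain_cons_cons.mp hch).1
          refine Or.inr ⟨b :: t', ⟨List.cons_ne_nil _ _,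
            fun x hx => hmem x (List.mem_cons_of_mem f hx),
            (List.isChain_cons_cons.mp hch).2⟩, ⟨b, rfl, hjun.symm⟩, ⟨g, ?_, hrg⟩⟩
          rw [← hg, List.getLast?_cons_cons]
  · -- every vertex of γ reaches v0 in Eg
    intro u hu
    obtain ⟨q, hq⟩ := hn
    exact reach_trans s r Eg (reach_mono s r hext.sub_edges hu) (Or.inr ⟨q, hq⟩)
end

section
/- Let G be a row-finite directed graph which satisfies Condition (K), and let (E, v_0) be a 1-sink extension of G such that the set of paths in E with range v_0 is infinite. Then H_E ∪ H_{v_0} is a saturated hereditary subset of E^0, where H_E is the inessential part of E and H_{v_0} := E^0 ∖ G^0. -/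
variable {V E : Type*}

/-- If `(Eg, v0)` is a 1-sink extension of a row-finite graph `G`
satisfying Condition (K), and the set of paths in `Eg` with range `v0` is
infinite, then `H_E ∪ H_{v0}` is a saturated hereditary subset of `E^0`,
where `H_E` is the inessential part and `H_{v0} = E^0 \ G^0`. -/
theorem inessential_union_new_vertices_saturated_hereditary
    (s r : E → V) (G Eg : DGraph V E) (v0 : V)
    (hGrf : RowFinite s G) (hK : ConditionK s r G)
    (hext : OneSinkExt s r G Eg v0)
    (hinf : {p : List E |
        IsPath s r Eg p ∧ ∃ e, p.getLast? = some e ∧ r e = v0}.Infinite) :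
    ((G.verts \ closureSink s r G Eg v0) ∪ (Eg.verts \ G.verts)) ⊆ Eg.verts ∧
    Hereditary s r Eg
      ((G.verts \ closureSink s r G Eg v0) ∪ (Eg.verts \ G.verts)) ∧
    Saturated s r Eg
      ((G.verts \ closureSink s r G Eg v0) ∪ (Eg.verts \ G.verts)) := by
  refine ⟨?_, ?_, ?_⟩
  · rintro v (⟨hv, -⟩ | ⟨hv, -⟩)
    · exact hext.sub_verts hv
    · exact hv
  · -- Hereditary
    intro e he hse
    by_cases heG : e ∈ G.edges
    · -- e is an edge of G, so s e ∈ G.verts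
      have hsG : (s e) ∈ G.verts := (hext.wfG e heG).1
      have hrG : (r e) ∈ G.verts := (hext.wfG e heG).2
      left
      refine ⟨hrG, ?_⟩
      rintro ⟨γ, htail, hreach, hrγ⟩
      -- s e reaches r e in G via the one-edge path [e]
      have hserγ : s e ∈ γ := by
        apply htail.2.2.2.1 (s e) (r e) _ hrγ
        right
        exact ⟨[e], ⟨by simp, by simpa using heG, by constructor⟩,
          ⟨e, rfl, rfl⟩, ⟨e, rfl, rfl⟩⟩
      rcases hse with ⟨-, hsnot⟩ | ⟨-, hsnotG⟩
      · exact hsnot ⟨γ, htail, hreach, hserγ⟩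
      · exact hsnotG hsG
    · -- new edge: range in Eg.verts \ G.verts
      right
      exact hext.new_edge_range e he heG
  · -- Saturated
    intro v hv hnsink hall
    by_cases hvG : v ∈ G.verts
    · left
      refine ⟨hvG, ?_⟩
      rintro ⟨γ, htail, hreach, hvγ⟩
      obtain ⟨e, heG, hse, hreγ⟩ := htail.2.2.2.2 v hvγ
      have := hall e (hext.sub_edges heG) hse
      have hrG : (r e) ∈ G.verts := htail.2.1 hreγ
      rcases this with ⟨-, hrnot⟩ | ⟨-, hrnotG⟩
      · exact hrnot ⟨γ, htail, hreach, hreγ⟩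
      · exact hrnotG hrG
    · right
      exact ⟨hv, hvG⟩
end

section
/- Let H and H' be complex Hilbert spaces, and let β be a map from the bounded operators on H to the bounded operators on H' which is ℂ-linear, multiplicative (β(ST) = β(S)β(T)), and star-preserving (β(S*) = β(S)*). Let e ∈ H and f ∈ H' be unit vectors such that β(e ⊗ e) = f ⊗ f, where for vectors h, k the rank-one operator h ⊗ k is defined by (h ⊗ k)(x) = ⟨k, x⟩ h. Define U : H → H' by U(h) := (β(h ⊗ e))(f). Then: (a) U is a linear isometry, i.e., ⟨U(h), U(k)⟩ = ⟨h, k⟩ for all h, k ∈ H; and (b) β(S) ∘ U = U ∘ S for every bounded operator S on H, so that U* β(S) U = S for all S. -/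
open ContinuousLinearMap

/-- Let `β` be a ℂ-linear, multiplicative, star-preserving map
between the bounded operators on complex Hilbert spaces `H` and `H'`, and let
`e ∈ H`, `f ∈ H'` be unit vectors with `β(e ⊗ e) = f ⊗ f`, where
`h ⊗ k : x ↦ ⟨k, x⟩ h`.  Then `U : h ↦ β(h ⊗ e) f` is a linear isometry and
`β(S) ∘ U = U ∘ S` for every bounded operator `S` on `H`. -/
theorem intertwiner_of_star_hom_fixing_rank_one
    {H H' : Type*}
    [NormedAddCommGroup H] [InnerProductSpace ℂ H] [CompleteSpace H]
    [NormedAddCommGroup H'] [InnerProductSpace ℂ H'] [CompleteSpace H']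
    (β : (H →L[ℂ] H) → (H' →L[ℂ] H'))
    (hadd : ∀ S T : H →L[ℂ] H, β (S + T) = β S + β T)
    (hsmul : ∀ (c : ℂ) (S : H →L[ℂ] H), β (c • S) = c • β S)
    (hmul : ∀ S T : H →L[ℂ] H, β (S * T) = β S * β T)
    (hstar : ∀ S : H →L[ℂ] H, β (star S) = star (β S))
    (e : H) (f : H') (he : ‖e‖ = 1) (hf : ‖f‖ = 1)
    (hef : β ((innerSL ℂ e).smulRight e) = (innerSL ℂ f).smulRight f)
    (U : H → H')
    (hU : ∀ h : H, U h = β ((innerSL ℂ e).smulRight h) f) :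
    -- (a) U is a linear isometry
    (∀ (c : ℂ) (h k : H), U (c • h + k) = c • U h + U k) ∧
    (∀ h k : H, (inner ℂ (U h) (U k) : ℂ) = (inner ℂ h k : ℂ)) ∧
    -- (b) β(S) ∘ U = U ∘ S for every bounded operator S on H
    (∀ (S : H →L[ℂ] H) (h : H), β S (U h) = U (S h)) := by
  set T : H → (H →L[ℂ] H) := fun h => (innerSL ℂ e).smulRight h with hT
  have hTlin : ∀ (c : ℂ) (h k : H), T (c • h + k) = c • T h + T k := by
    intro c h k; ext x; simp [hT, smul_smul, smul_add, mul_comm]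
  have hstarT : ∀ h : H, star (T h) = (innerSL ℂ h).smulRight e := by
    intro h
    rw [hT, star_eq_adjoint]
    symm
    rw [eq_adjoint_iff]
    intro x y
    simp [inner_smul_left, inner_smul_right, mul_comm]
  have hkey : ∀ h k : H, star (T h) * T k = (inner ℂ h k : ℂ) • T e := by
    intro h k
    ext x
    rw [ContinuousLinearMap.mul_apply, hstarT]
    simp [hstarT, hT, mul_apply, inner_smul_right, smul_smul, mul_comm, mul_left_comm]
  have hff : (inner ℂ f f : ℂ) = 1 := by
    rw [inner_self_eq_norm_sq_to_K, hf]; norm_num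
  have hU' : ∀ h : H, U h = β (T h) f := hU
  refine ⟨?_, ?_, ?_⟩
  · intro c h k
    rw [hU', hU', hU', hTlin, hadd, hsmul]
    simp
  · intro h k
    rw [hU', hU', ← adjoint_inner_left, ← star_eq_adjoint, ← hstar,
      ← ContinuousLinearMap.mul_apply, ← hmul, hkey k h, hsmul, hef]
    simp [inner_smul_left, inner_smul_right, hff, hf]
  · intro S h
    have hST : S * T h = T (S h) := by
      ext x; simp [hT, mul_apply]
    rw [hU', hU', ← ContinuousLinearMap.mul_apply, ← hmul, hST]
end
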